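/- arXiv:2010.06795 — 3 statements merged into one kernel-verified Lean document; each statement's English description precedes it below -/
import Mathlib

section
/- Define f : N⁶ → Z⁴ on the free commutative monoid N⁶ by sending the generators to R₁ = (0,1,1,0), R₂ = (1,0,0,2), R₃ = (1,0,2,0), R₄ = (1,2,0,4), R₅ = (1,0,1,1), R₆ = (1,1,0,3). Let V = {e₂+e₃−2e₅, e₂+e₄−2e₆, e₁+2e₂−e₅−e₆, e₁+e₂+e₅−e₃−e₆, e₁+e₂+e₆−e₄−e₅, e₁+e₅+e₆−e₃−e₄} ⊂ Z⁶. Declare x ~ y for x, y ∈ N⁶ if y − x ∈ V or x − y ∈ V (viewing N⁶ ⊂ Z⁶). Then for x, y ∈ N⁶, f(x) = f(y) if and only if x and y are connected by a finite chain of ~-moves that stays entirely inside N⁶. -/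
/-- The intersection profiles `(H·Rᵢ, E₀·Rᵢ, E_∞·Rᵢ, E·Rᵢ)` of the six generators
of the monoid of integral nef curve classes. -/
def R : Fin 6 → (Fin 4 → ℤ)
  | 0 => ![0, 1, 1, 0]
  | 1 => ![1, 0, 0, 2]
  | 2 => ![1, 0, 2, 0]
  | 3 => ![1, 2, 0, 4]
  | 4 => ![1, 0, 1, 1]
  | 5 => ![1, 1, 0, 3]

/-- The standard basis vectors of `ℤ⁶`. -/
def e (i : Fin 6) : Fin 6 → ℤ := Pi.single i 1

/-- The six relation vectors in `ℤ⁶`. -/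
def V : Set (Fin 6 → ℤ) :=
  {e 1 + e 2 - 2 • e 4, e 1 + e 3 - 2 • e 5, e 0 + 2 • e 1 - e 4 - e 5,
   e 0 + e 1 + e 4 - e 2 - e 5, e 0 + e 1 + e 5 - e 3 - e 4,
   e 0 + e 4 + e 5 - e 2 - e 3}

/-- The inclusion `ℕ⁶ ⊆ ℤ⁶`. -/
def intVec (x : Fin 6 → ℕ) : Fin 6 → ℤ := fun i => (x i : ℤ)

/-- One elementary move: replace `x` by `y` where the difference (in `ℤ⁶`) is one
of the six relation vectors, in either direction; both `x` and `y` lie in `ℕ⁶`. -/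
def step (x y : Fin 6 → ℕ) : Prop := intVec y - intVec x ∈ V ∨ intVec x - intVec y ∈ V

section Aux

/-- Auxiliary: explicit vectors in `ℕ⁶` with easy evaluation lemmas. -/
def v6 (a b c d f g : ℕ) : Fin 6 → ℕ := ![a, b, c, d, f, g]
@[simp] lemma v6_0 (a b c d f g : ℕ) : v6 a b c d f g 0 = a := rfl
@[simp] lemma v6_1 (a b c d f g : ℕ) : v6 a b c d f g 1 = b := rfl
@[simp] lemma v6_2 (a b c d f g : ℕ) : v6 a b c d f g 2 = c := rfl
@[simp] lemma v6_3 (a b c d f g : ℕ) : v6 a b c d f g 3 = d := rfl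
@[simp] lemma v6_4 (a b c d f g : ℕ) : v6 a b c d f g 4 = f := rfl
@[simp] lemma v6_5 (a b c d f g : ℕ) : v6 a b c d f g 5 = g := rfl

lemma sum_V_eq_zero : ∀ v ∈ V, (∑ i : Fin 6, v i • R i) = 0 := by
  intro v hv
  simp only [V, Set.mem_insert_iff, Set.mem_singleton_iff] at hv
  rcases hv with h|h|h|h|h|h <;> subst h <;> funext j <;> fin_cases j <;>
    simp [Fin.sum_univ_six, e, R, Pi.single_apply]

lemma F_eq_of_step {x y : Fin 6 → ℕ} (h : step x y) :
    (∑ i : Fin 6, (x i : ℤ) • R i) = (∑ i : Fin 6, (y i : ℤ) • R i) := by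
  have key : ∀ u w : Fin 6 → ℕ, intVec w - intVec u ∈ V →
      (∑ i : Fin 6, (u i : ℤ) • R i) = (∑ i : Fin 6, (w i : ℤ) • R i) := by
    intro u w hm
    have h0 := sum_V_eq_zero _ hm
    have h1 : (∑ i : Fin 6, (intVec w - intVec u) i • R i)
        = (∑ i : Fin 6, (w i : ℤ) • R i) - (∑ i : Fin 6, (u i : ℤ) • R i) := by
      rw [← Finset.sum_sub_distrib]
      refine Finset.sum_congr rfl fun i _ => ?_
      simp [intVec, sub_smul]
    rw [h1] at h0
    exact (sub_eq_zero.mp h0).symm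
  rcases h with h | h
  · exact key x y h
  · exact (key y x h).symm

lemma F_eq_of_rtg {x y : Fin 6 → ℕ} (h : Relation.ReflTransGen step x y) :
    (∑ i : Fin 6, (x i : ℤ) • R i) = (∑ i : Fin 6, (y i : ℤ) • R i) := by
  induction h with
  | refl => rfl
  | tail _ hs ih => exact ih.trans (F_eq_of_step hs)

lemma step_symm {x y : Fin 6 → ℕ} (h : step x y) : step y x := h.symm

lemma rtg_symm {x y : Fin 6 → ℕ} (h : Relation.ReflTransGen step x y) :
    Relation.ReflTransGen step y x := by
  induction h with
  | refl => exact .refl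
  | tail _ hs ih => exact .head (step_symm hs) ih

/-! The six elementary moves used in the reduction to normal form. -/

lemma stepM2 (x : Fin 6 → ℕ) (h1 : 1 ≤ x 1) (h3 : 1 ≤ x 3) :
    step x (v6 (x 0) (x 1 - 1) (x 2) (x 3 - 1) (x 4) (x 5 + 2)) := by
  right
  have hd : intVec x - intVec (v6 (x 0) (x 1 - 1) (x 2) (x 3 - 1) (x 4) (x 5 + 2))
      = e 1 + e 3 - 2 • e 5 := by
    funext i; fin_cases i <;> simp [intVec, e, Pi.single_apply] <;> omega
  rw [hd]
  simp only [V, Set.mem_insert_iff, Set.mem_singleton_iff]; tauto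

lemma stepM5 (x : Fin 6 → ℕ) (h3 : 1 ≤ x 3) (h4 : 1 ≤ x 4) :
    step x (v6 (x 0 + 1) (x 1 + 1) (x 2) (x 3 - 1) (x 4 - 1) (x 5 + 1)) := by
  left
  have hd : intVec (v6 (x 0 + 1) (x 1 + 1) (x 2) (x 3 - 1) (x 4 - 1) (x 5 + 1)) - intVec x
      = e 0 + e 1 + e 5 - e 3 - e 4 := by
    funext i; fin_cases i <;> simp [intVec, e, Pi.single_apply] <;> omega
  rw [hd]
  simp only [V, Set.mem_insert_iff, Set.mem_singleton_iff]; tauto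

lemma stepM6 (x : Fin 6 → ℕ) (h2 : 1 ≤ x 2) (h3 : 1 ≤ x 3) :
    step x (v6 (x 0 + 1) (x 1) (x 2 - 1) (x 3 - 1) (x 4 + 1) (x 5 + 1)) := by
  left
  have hd : intVec (v6 (x 0 + 1) (x 1) (x 2 - 1) (x 3 - 1) (x 4 + 1) (x 5 + 1)) - intVec x
      = e 0 + e 4 + e 5 - e 2 - e 3 := by
    funext i; fin_cases i <;> simp [intVec, e, Pi.single_apply] <;> omega
  rw [hd]
  simp only [V, Set.mem_insert_iff, Set.mem_singleton_iff]; tauto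

lemma stepM1 (x : Fin 6 → ℕ) (h1 : 1 ≤ x 1) (h2 : 1 ≤ x 2) :
    step x (v6 (x 0) (x 1 - 1) (x 2 - 1) (x 3) (x 4 + 2) (x 5)) := by
  right
  have hd : intVec x - intVec (v6 (x 0) (x 1 - 1) (x 2 - 1) (x 3) (x 4 + 2) (x 5))
      = e 1 + e 2 - 2 • e 4 := by
    funext i; fin_cases i <;> simp [intVec, e, Pi.single_apply] <;> omega
  rw [hd]
  simp only [V, Set.mem_insert_iff, Set.mem_singleton_iff]; tauto

lemma stepM4 (x : Fin 6 → ℕ) (h2 : 1 ≤ x 2) (h5 : 1 ≤ x 5) :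
    step x (v6 (x 0 + 1) (x 1 + 1) (x 2 - 1) (x 3) (x 4 + 1) (x 5 - 1)) := by
  left
  have hd : intVec (v6 (x 0 + 1) (x 1 + 1) (x 2 - 1) (x 3) (x 4 + 1) (x 5 - 1)) - intVec x
      = e 0 + e 1 + e 4 - e 2 - e 5 := by
    funext i; fin_cases i <;> simp [intVec, e, Pi.single_apply] <;> omega
  rw [hd]
  simp only [V, Set.mem_insert_iff, Set.mem_singleton_iff]; tauto

lemma stepM3 (x : Fin 6 → ℕ) (h0 : 1 ≤ x 0) (h1 : 2 ≤ x 1) :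
    step x (v6 (x 0 - 1) (x 1 - 2) (x 2) (x 3) (x 4 + 1) (x 5 + 1)) := by
  right
  have hd : intVec x - intVec (v6 (x 0 - 1) (x 1 - 2) (x 2) (x 3) (x 4 + 1) (x 5 + 1))
      = e 0 + 2 • e 1 - e 4 - e 5 := by
    funext i; fin_cases i <;> simp [intVec, e, Pi.single_apply] <;> omega
  rw [hd]
  simp only [V, Set.mem_insert_iff, Set.mem_singleton_iff]; tauto

/-- Normal-form (terminal) condition. -/
def Term (x : Fin 6 → ℕ) : Prop :=
  (x 3 = 0 ∨ (x 1 = 0 ∧ x 2 = 0 ∧ x 4 = 0)) ∧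
  (x 2 = 0 ∨ (x 1 = 0 ∧ x 5 = 0)) ∧
  (x 0 = 0 ∨ x 1 ≤ 1)

/-- Stage 1: kill the coefficient of `R₄` (index 3) if possible. -/
lemma stage3 : ∀ n (x : Fin 6 → ℕ), x 3 ≤ n →
    ∃ y, Relation.ReflTransGen step x y ∧
      (y 3 = 0 ∨ (y 1 = 0 ∧ y 2 = 0 ∧ y 4 = 0)) := by
  intro n
  induction n with
  | zero => exact fun x hx => ⟨x, .refl, Or.inl (Nat.le_zero.mp hx)⟩
  | succ n ih =>
    intro x hx
    by_cases h3 : x 3 = 0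
    · exact ⟨x, .refl, Or.inl h3⟩
    have h3' : 1 ≤ x 3 := Nat.one_le_iff_ne_zero.mpr h3
    by_cases h1 : 1 ≤ x 1
    · obtain ⟨y, hy, hp⟩ := ih (v6 (x 0) (x 1 - 1) (x 2) (x 3 - 1) (x 4) (x 5 + 2))
        (by simp; omega)
      exact ⟨y, .head (stepM2 x h1 h3') hy, hp⟩
    by_cases h4 : 1 ≤ x 4
    · obtain ⟨y, hy, hp⟩ := ih (v6 (x 0 + 1) (x 1 + 1) (x 2) (x 3 - 1) (x 4 - 1) (x 5 + 1))
        (by simp; omega)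
      exact ⟨y, .head (stepM5 x h3' h4) hy, hp⟩
    by_cases h2 : 1 ≤ x 2
    · obtain ⟨y, hy, hp⟩ := ih (v6 (x 0 + 1) (x 1) (x 2 - 1) (x 3 - 1) (x 4 + 1) (x 5 + 1))
        (by simp; omega)
      exact ⟨y, .head (stepM6 x h2 h3') hy, hp⟩
    · exact ⟨x, .refl, Or.inr ⟨by omega, by omega, by omega⟩⟩

/-- Stage 2: with the coefficient of `R₄` zero, kill the coefficient of `R₃`. -/
lemma stage2 : ∀ n (x : Fin 6 → ℕ), x 2 ≤ n → x 3 = 0 →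
    ∃ y, Relation.ReflTransGen step x y ∧ y 3 = 0 ∧
      (y 2 = 0 ∨ (y 1 = 0 ∧ y 5 = 0)) := by
  intro n
  induction n with
  | zero => exact fun x hx h3 => ⟨x, .refl, h3, Or.inl (Nat.le_zero.mp hx)⟩
  | succ n ih =>
    intro x hx h3
    by_cases h2 : x 2 = 0
    · exact ⟨x, .refl, h3, Or.inl h2⟩
    have h2' : 1 ≤ x 2 := Nat.one_le_iff_ne_zero.mpr h2
    by_cases h1 : 1 ≤ x 1
    · obtain ⟨y, hy, hp⟩ := ih (v6 (x 0) (x 1 - 1) (x 2 - 1) (x 3) (x 4 + 2) (x 5))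
        (by simp; omega) (by simpa)
      exact ⟨y, .head (stepM1 x h1 h2') hy, hp⟩
    by_cases h5 : 1 ≤ x 5
    · obtain ⟨y, hy, hp⟩ := ih (v6 (x 0 + 1) (x 1 + 1) (x 2 - 1) (x 3) (x 4 + 1) (x 5 - 1))
        (by simp; omega) (by simpa)
      exact ⟨y, .head (stepM4 x h2' h5) hy, hp⟩
    · exact ⟨x, .refl, h3, Or.inr ⟨by omega, by omega⟩⟩

/-- Stage 3: with both exceptional coefficients zero, reduce the coefficient of `R₁`. -/
lemma stage0 : ∀ n (x : Fin 6 → ℕ), x 0 ≤ n → x 3 = 0 → x 2 = 0 →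
    ∃ y, Relation.ReflTransGen step x y ∧ y 3 = 0 ∧ y 2 = 0 ∧
      (y 0 = 0 ∨ y 1 ≤ 1) := by
  intro n
  induction n with
  | zero => exact fun x hx h3 h2 => ⟨x, .refl, h3, h2, Or.inl (Nat.le_zero.mp hx)⟩
  | succ n ih =>
    intro x hx h3 h2
    by_cases h0 : 1 ≤ x 0
    · by_cases h1 : 2 ≤ x 1
      · obtain ⟨y, hy, hp⟩ := ih (v6 (x 0 - 1) (x 1 - 2) (x 2) (x 3) (x 4 + 1) (x 5 + 1))
          (by simp; omega) (by simpa) (by simpa)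
        exact ⟨y, .head (stepM3 x h0 h1) hy, hp⟩
      · exact ⟨x, .refl, h3, h2, Or.inr (by omega)⟩
    · exact ⟨x, .refl, h3, h2, Or.inl (by omega)⟩

/-- Every point reduces to a terminal point. -/
lemma reach (x : Fin 6 → ℕ) : ∃ t, Relation.ReflTransGen step x t ∧ Term t := by
  obtain ⟨y, hxy, hp⟩ := stage3 (x 3) x le_rfl
  rcases hp with h3 | ⟨h1, h2, h4⟩
  · obtain ⟨z, hyz, hz3, hp⟩ := stage2 (y 2) y le_rfl h3
    rcases hp with h2 | ⟨h1, h5⟩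
    · obtain ⟨t, hzt, ht3, ht2, hp⟩ := stage0 (z 0) z le_rfl hz3 h2
      exact ⟨t, (hxy.trans hyz).trans hzt, Or.inl ht3, Or.inl ht2, hp⟩
    · exact ⟨z, hxy.trans hyz, Or.inl hz3, Or.inr ⟨h1, h5⟩, Or.inr (by omega)⟩
  · exact ⟨y, hxy, Or.inr ⟨h1, h2, h4⟩, Or.inl h2, Or.inr (by omega)⟩

set_option maxHeartbeats 1000000 in
/-- Two terminal points with the same image under `f` coincide. -/
lemma term_unique {s t : Fin 6 → ℕ} (hs : Term s) (ht : Term t)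
    (hF : (∑ i : Fin 6, (s i : ℤ) • R i) = (∑ i : Fin 6, (t i : ℤ) • R i)) : s = t := by
  have h0 := congrFun hF 0
  have h1 := congrFun hF 1
  have h2 := congrFun hF 2
  simp only [Finset.sum_apply, Pi.smul_apply, Fin.sum_univ_six, R, smul_eq_mul,
    Matrix.cons_val_zero, Matrix.cons_val_one, Matrix.head_cons, Matrix.cons_val_two,
    Matrix.cons_val_three, Matrix.tail_cons] at h0 h1 h2
  obtain ⟨hs3, hs2, hs0⟩ := hs
  obtain ⟨ht3, ht2, ht0⟩ := ht
  clear hF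
  have key : s 0 = t 0 ∧ s 1 = t 1 ∧ s 2 = t 2 ∧ s 3 = t 3 ∧ s 4 = t 4 ∧ s 5 = t 5 := by
    omega
  funext i
  fin_cases i
  · exact key.1
  · exact key.2.1
  · exact key.2.2.1
  · exact key.2.2.2.1
  · exact key.2.2.2.2.1
  · exact key.2.2.2.2.2

end Aux

/-- Two formal nonnegative sums of the generators `R₁, …, R₆` have the same image
in `ℤ⁴` iff they are connected by a finite chain of relation moves staying in `ℕ⁶`. -/
theorem stmt_8 (x y : Fin 6 → ℕ) :
    (∑ i : Fin 6, (x i : ℤ) • R i) = (∑ i : Fin 6, (y i : ℤ) • R i) ↔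
      Relation.ReflTransGen step x y := by
  constructor
  · intro hF
    obtain ⟨s, hxs, hTs⟩ := reach x
    obtain ⟨t, hyt, hTt⟩ := reach y
    have hst : s = t :=
      term_unique hTs hTt
        (((F_eq_of_rtg hxs).symm.trans hF).trans (F_eq_of_rtg hyt))
    exact hxs.trans (hst ▸ rtg_symm hyt)
  · exact F_eq_of_rtg
end

section
/- Let R₁ = (0,1,1,0), R₂ = (1,0,0,2), R₃ = (1,0,2,0), R₄ = (1,2,0,4), R₅ = (1,0,1,1), R₆ = (1,1,0,3) in Z⁴. Every vector v = (h, e₀, e_∞, e) ∈ Z⁴ satisfying h ≥ 0, e₀ ≥ 0, e_∞ ≥ 0, e ≥ 0, 4h − e ≥ 0, and −2h − e₀ + e_∞ + e = 0 is a nonnegative integral linear combination of R₁, …, R₆. -/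
private lemma vec6_four {α : Type*} (a b c d e f : α) : ![a, b, c, d, e, f] 4 = e := rfl

private lemma vec6_five {α : Type*} (a b c d e f : α) : ![a, b, c, d, e, f] 5 = f := rfl

/-- Every integral vector `(h, e₀, e_∞, e)` with `h, e₀, e_∞, e ≥ 0`, `4h - e ≥ 0`
and `-2h - e₀ + e_∞ + e = 0` is a nonnegative integral combination of `R₁, …, R₆`. -/
theorem stmt_9 (v : Fin 4 → ℤ)
    (h0 : 0 ≤ v 0) (h1 : 0 ≤ v 1) (h2 : 0 ≤ v 2) (h3 : 0 ≤ v 3)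
    (h4 : 0 ≤ 4 * v 0 - v 3)
    (h5 : -2 * v 0 - v 1 + v 2 + v 3 = 0) :
    ∃ c : Fin 6 → ℕ, v = ∑ i : Fin 6, (c i : ℤ) • R i := by
  obtain ⟨k, hk | hk⟩ := Int.even_or_odd' (v 3)
  · by_cases hle : v 3 ≤ 2 * v 0
    · refine ⟨![(v 1).toNat, k.toNat, (v 0 - k).toNat, 0, 0, 0], ?_⟩
      funext j
      fin_cases j <;>
        simp [Fin.sum_univ_six, R, vec6_four, vec6_five] <;> omega
    · refine ⟨![(v 1 - 2 * (k - v 0)).toNat, (2 * v 0 - k).toNat, 0,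
        (k - v 0).toNat, 0, 0], ?_⟩
      funext j
      fin_cases j <;>
        simp [Fin.sum_univ_six, R, vec6_four, vec6_five] <;> omega
  · by_cases hle : v 3 ≤ 2 * v 0
    · refine ⟨![(v 1).toNat, k.toNat, (v 0 - k - 1).toNat, 0, 1, 0], ?_⟩
      funext j
      fin_cases j <;>
        simp [Fin.sum_univ_six, R, vec6_four, vec6_five] <;> omega
    · refine ⟨![(v 1 - 2 * (k - v 0) - 1).toNat, (2 * v 0 - k - 1).toNat, 0,
        (k - v 0).toNat, 0, 1], ?_⟩
      funext j
      fin_cases j <;>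
        simp [Fin.sum_univ_six, R, vec6_four, vec6_five] <;> omega
end

section
/- Let f : Z⁶ → Z⁴ be the group homomorphism sending the standard basis to R₁ = (0,1,1,0), R₂ = (1,0,0,2), R₃ = (1,0,2,0), R₄ = (1,2,0,4), R₅ = (1,0,1,1), R₆ = (1,1,0,3). Then the image of f equals the sublattice L = {(h, e₀, e_∞, e) ∈ Z⁴ : −2h − e₀ + e_∞ + e = 0}. -/
/-- The image of the homomorphism `ℤ⁶ → ℤ⁴` sending the standard basis to
`R₁, …, R₆` is the sublattice `{(h, e₀, e_∞, e) : -2h - e₀ + e_∞ + e = 0}`. -/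
theorem stmt_11 :
    {v : Fin 4 → ℤ | ∃ x : Fin 6 → ℤ, v = ∑ i : Fin 6, x i • R i} =
      {v : Fin 4 → ℤ | -2 * v 0 - v 1 + v 2 + v 3 = 0} := by
  ext v
  simp only [Set.mem_setOf_eq]
  constructor
  · rintro ⟨x, rfl⟩
    simp [Fin.sum_univ_six, R, Matrix.cons_val_zero, Matrix.cons_val_one]
    ring
  · intro h
    refine ⟨fun i => match i with | 0 => v 1 | 1 => 0 | 2 => v 2 - v 1 - v 0 | 3 => 0 | 4 => v 3 | 5 => 0, ?_⟩
    funext j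
    fin_cases j <;>
      simp [Fin.sum_univ_six, R] <;> linarith
end
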